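/- Let X ∈ L(𝒳 ⊗ 𝒴) with ‖X‖₁ = 1 and suppose Tr_𝒴(X) = uv* for unit vectors u, v ∈ 𝒳. Then there exists a density operator σ on 𝒴 such that X = uv* ⊗ σ. -/

import Mathlib

open Matrix Kronecker BigOperators ComplexOrder

noncomputable section

/-- Square root of a positive semidefinite matrix (removed from Mathlib; old definition). -/
noncomputable def Matrix.PosSemidef.sqrt {𝕜 : Type*} [RCLike 𝕜] {n : Type*} [Fintype n]
    [DecidableEq n] {A : Matrix n n 𝕜} (hA : A.PosSemidef) : Matrix n n 𝕜 :=
  hA.1.eigenvectorUnitary.1 * diagonal ((↑) ∘ (√·) ∘ hA.1.eigenvalues) *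
  (star hA.1.eigenvectorUnitary : Matrix n n 𝕜)

/-- Trace norm (sum of singular values) of a complex matrix. -/
noncomputable def traceNorm {l m : Type*} [Fintype l] [Fintype m] [DecidableEq m]
    (A : Matrix l m ℂ) : ℝ :=
  ((Matrix.posSemidef_conjTranspose_mul_self A).sqrt.trace).re

/-- Frobenius norm. -/
noncomputable def frobNorm {l m : Type*} [Fintype l] [Fintype m]
    (A : Matrix l m ℂ) : ℝ :=
  Real.sqrt ((Aᴴ * A).trace.re)

/-- Partial transpose on the first tensor factor. -/
def ptranspose {a b : Type*} (X : Matrix (a × b) (a × b) ℂ) : Matrix (a × b) (a × b) ℂ :=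
  Matrix.of fun p q => X (q.1, p.2) (p.1, q.2)

/-- Outer product `u v*`. -/
def outer {a : Type*} (u v : a → ℂ) : Matrix a a ℂ :=
  Matrix.of fun p q => u p * star (v q)

/-- Density operator: positive semidefinite with trace one. -/
def IsDensity {a : Type*} [Fintype a] (ρ : Matrix a a ℂ) : Prop :=
  ρ.PosSemidef ∧ ρ.trace = 1

/-- Maximally entangled unit vector in `ℂⁿ ⊗ ℂᵐ`. -/
def MaxEntangled (n m : ℕ) (u : Fin n × Fin m → ℂ) : Prop :=
  ∃ (x : Fin (min n m) → EuclideanSpace ℂ (Fin n))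
    (y : Fin (min n m) → EuclideanSpace ℂ (Fin m)),
    Orthonormal ℂ x ∧ Orthonormal ℂ y ∧
      ∀ p : Fin n × Fin m,
        u p = (1 / Real.sqrt (min n m) : ℝ) * ∑ i, x i p.1 * y i p.2

/-- Extension `Φ ⊗ I` of a matrix map to a system with ancilla `c`. -/
def tensorExt {a b c : Type*} [Fintype a] [DecidableEq a] [Fintype c]
    (Φ : Matrix a a ℂ →ₗ[ℂ] Matrix b b ℂ)
    (X : Matrix (a × c) (a × c) ℂ) : Matrix (b × c) (b × c) ℂ :=
  Matrix.of fun p q => Φ (Matrix.of fun i j => X (i, p.2) (j, q.2)) p.1 q.1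

/-- Quantum channel: completely positive and trace preserving. -/
def IsChannel {a b : Type*} [Fintype a] [DecidableEq a] [Fintype b]
    (Φ : Matrix a a ℂ →ₗ[ℂ] Matrix b b ℂ) : Prop :=
  (∀ X, (Φ X).trace = X.trace) ∧
    ∀ (k : ℕ) (X : Matrix (a × Fin k) (a × Fin k) ℂ),
      X.PosSemidef → (tensorExt Φ X).PosSemidef

/-- Partial trace over the second tensor factor. -/
def ptraceRight {a b : Type*} [Fintype b] (M : Matrix (a × b) (a × b) ℂ) :
    Matrix a a ℂ :=
  Matrix.of fun i k => ∑ c, M (i, c) (k, c)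

/-- Partial trace over the first tensor factor. -/
def ptraceLeft {a b : Type*} [Fintype a] (M : Matrix (a × b) (a × b) ℂ) :
    Matrix b b ℂ :=
  Matrix.of fun i k => ∑ c, M (c, i) (c, k)

/-- Canonical maximally entangled state `τ = (1/d) vec(I)vec(I)*` on `a ⊗ a`. -/
noncomputable def tauGen {a : Type*} [Fintype a] [DecidableEq a] :
    Matrix (a × a) (a × a) ℂ :=
  Matrix.of fun p q =>
    (Fintype.card a : ℂ)⁻¹ * (if p.1 = p.2 then 1 else 0) * (if q.1 = q.2 then 1 else 0)

/-- The operator `τ ⊗ σ` on `a ⊗ (a ⊗ r)`. -/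
noncomputable def tauSigma {a r : Type*} [Fintype a] [DecidableEq a]
    (σ : Matrix r r ℂ) : Matrix (a × (a × r)) (a × (a × r)) ℂ :=
  Matrix.of fun p q => tauGen (p.1, p.2.1) (q.1, q.2.1) * σ p.2.2 q.2.2

/-- Fidelity of two positive semidefinite matrices. -/
noncomputable def fidelity {a : Type*} [Fintype a] [DecidableEq a]
    {P Q : Matrix a a ℂ} (hP : P.PosSemidef) (hQ : Q.PosSemidef) : ℝ :=
  traceNorm (hP.sqrt * hQ.sqrt)
lemma Matrix.PosSemidef.posSemidef_sqrt {𝕜 : Type*} [RCLike 𝕜] {n : Type*} [Fintype n]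
    [DecidableEq n] {A : Matrix n n 𝕜} (hA : A.PosSemidef) : hA.sqrt.PosSemidef := by
  have h := (posSemidef_diagonal_iff.mpr (fun i => RCLike.ofReal_nonneg.mpr (Real.sqrt_nonneg _)) :
    (diagonal ((↑) ∘ (√·) ∘ hA.1.eigenvalues : n → 𝕜)).PosSemidef).mul_mul_conjTranspose_same
    (hA.1.eigenvectorUnitary : Matrix n n 𝕜)
  unfold Matrix.PosSemidef.sqrt
  rw [star_eq_conjTranspose]
  exact h

lemma Matrix.PosSemidef.sqrt_mul_self {𝕜 : Type*} [RCLike 𝕜] {n : Type*} [Fintype n]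
    [DecidableEq n] {A : Matrix n n 𝕜} (hA : A.PosSemidef) : hA.sqrt * hA.sqrt = A := by
  have hU : (star hA.1.eigenvectorUnitary : Matrix n n 𝕜) * hA.1.eigenvectorUnitary.1 = 1 :=
    Unitary.coe_star_mul_self _
  have hD : diagonal ((↑) ∘ (√·) ∘ hA.1.eigenvalues : n → 𝕜) *
      diagonal ((↑) ∘ (√·) ∘ hA.1.eigenvalues : n → 𝕜) = diagonal (RCLike.ofReal ∘ hA.1.eigenvalues) := by
    rw [diagonal_mul_diagonal]; congr 1; ext i
    simp [← RCLike.ofReal_mul, Real.mul_self_sqrt (hA.eigenvalues_nonneg i)]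
  conv_rhs => rw [hA.1.spectral_theorem]
  unfold Matrix.PosSemidef.sqrt
  simp only [Unitary.conjStarAlgAut_apply]
  rw [← hD]
  simp only [Matrix.mul_assoc]
  rw [← Matrix.mul_assoc _ hA.1.eigenvectorUnitary.1, hU, Matrix.one_mul]

set_option linter.unusedSectionVars false
set_option maxHeartbeats 1000000
open scoped InnerProductSpace
variable {d : Type*} [Fintype d] [DecidableEq d]

lemma dot_adjoint (M : Matrix d d ℂ) (x y : d → ℂ) :
    star x ⬝ᵥ (M *ᵥ y) = star (Mᴴ *ᵥ x) ⬝ᵥ y := by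
  rw [star_mulVec, dotProduct_mulVec, conjTranspose_conjTranspose]

noncomputable def e : (d → ℂ) → EuclideanSpace ℂ d := (WithLp.equiv 2 (d → ℂ)).symm

lemma inner_e (x y : d → ℂ) : ⟪e x, e y⟫_ℂ = star x ⬝ᵥ y := dotProduct_comm y (star x)

lemma norm_e_sq (x : d → ℂ) : ‖e x‖ ^ 2 = (star x ⬝ᵥ x).re := by
  rw [← inner_self_eq_norm_sq (𝕜 := ℂ), inner_e, RCLike.re_to_complex]

lemma trace_eq_sum_basis (P : Matrix d d ℂ) (hP : P.IsHermitian) (M : Matrix d d ℂ) :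
    M.trace = ∑ i, star ⇑(hP.eigenvectorBasis i) ⬝ᵥ (M *ᵥ ⇑(hP.eigenvectorBasis i)) := by
  set U : Matrix d d ℂ := (hP.eigenvectorUnitary : Matrix d d ℂ)
  have hU : U * star U = 1 := (Matrix.mem_unitaryGroup_iff).mp hP.eigenvectorUnitary.2
  have : M.trace = (star U * (M * U)).trace := by
    rw [Matrix.trace_mul_comm, Matrix.mul_assoc, hU, Matrix.mul_one]
  rw [this, Matrix.trace]
  apply Finset.sum_congr rfl
  intro i _
  simp only [Matrix.diag_apply, Matrix.mul_apply, Matrix.mulVec, dotProduct,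
    Matrix.star_apply, Pi.star_apply, Finset.mul_sum, Finset.sum_mul]
  apply Finset.sum_congr rfl
  intro a _
  apply Finset.sum_congr rfl
  intro b _
  simp only [U, Matrix.IsHermitian.eigenvectorUnitary_apply]

lemma key (B X P : Matrix d d ℂ) (hP : P.PosSemidef) (hXX : Xᴴ * X = P * P)
    (hB : ∀ z : d → ℂ, ‖e (B *ᵥ z)‖ ≤ ‖e z‖)
    (hBH : ∀ z : d → ℂ, ‖e (Bᴴ *ᵥ z)‖ ≤ ‖e z‖)
    (htr : (B * X).trace = P.trace) : B * X = P := by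
  have hherm := hP.isHermitian
  set w := hherm.eigenvectorBasis with hw
  set lam := hherm.eigenvalues with hlam
  have hlam0 : ∀ i, 0 ≤ lam i := hP.eigenvalues_nonneg
  have hwe : ∀ i, e ⇑(w i) = w i := fun i => rfl
  have hwnorm : ∀ i, ‖e ⇑(w i)‖ = 1 := fun i => by rw [hwe]; exact w.orthonormal.1 i
  -- norms of X and P agree
  have hXP : ∀ z : d → ℂ, ‖e (X *ᵥ z)‖ = ‖e (P *ᵥ z)‖ := by
    intro z
    have h1 : ‖e (X *ᵥ z)‖ ^ 2 = ‖e (P *ᵥ z)‖ ^ 2 := by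
      rw [norm_e_sq, norm_e_sq, dot_adjoint X (X *ᵥ z) z, dot_adjoint P (P *ᵥ z) z,
        mulVec_mulVec, mulVec_mulVec, hXX, hP.isHermitian.eq, ← hP.isHermitian.eq]
    have := sq_abs (‖e (X *ᵥ z)‖)
    nlinarith [norm_nonneg (e (X *ᵥ z)), norm_nonneg (e (P *ᵥ z))]
  have hPw : ∀ i, P *ᵥ ⇑(w i) = (lam i : ℂ) • ⇑(w i) := by
    intro i
    rw [hherm.mulVec_eigenvectorBasis]
    ext a; simp [RCLike.real_smul_eq_coe_smul (K := ℂ)]; rfl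
  have hXwnorm : ∀ i, ‖e (X *ᵥ ⇑(w i))‖ = lam i := by
    intro i
    rw [hXP, hPw]
    have : e ((lam i : ℂ) • ⇑(w i)) = (lam i : ℂ) • (e ⇑(w i)) := rfl
    rw [this, norm_smul, hwnorm, mul_one]
    simp [abs_of_nonneg (hlam0 i)]
  -- trace identities
  have htrsum : ∑ i, star ⇑(w i) ⬝ᵥ ((B * X) *ᵥ ⇑(w i)) = ∑ i, (lam i : ℂ) := by
    rw [← trace_eq_sum_basis P hherm (B * X), htr, trace_eq_sum_basis P hherm P]
    apply Finset.sum_congr rfl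
    intro i _
    rw [hPw i, dotProduct_smul]
    have : star ⇑(w i) ⬝ᵥ ⇑(w i) = 1 := by
      have := orthonormal_iff_ite.mp w.orthonormal i i
      rw [if_pos rfl] at this
      exact (inner_e (w i).ofLp (w i).ofLp).symm.trans this
    rw [this]; simp
  have hci : ∀ i, star ⇑(w i) ⬝ᵥ ((B * X) *ᵥ ⇑(w i))
      = ⟪e (Bᴴ *ᵥ ⇑(w i)), e (X *ᵥ ⇑(w i))⟫_ℂ := by
    intro i
    rw [inner_e, ← mulVec_mulVec, dot_adjoint B]
  have hble : ∀ i, (star ⇑(w i) ⬝ᵥ ((B * X) *ᵥ ⇑(w i))).re ≤ lam i := by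
    intro i
    rw [hci]
    have hre := re_inner_le_norm (𝕜 := ℂ) (e (Bᴴ *ᵥ ⇑(w i))) (e (X *ᵥ ⇑(w i)))
    rw [RCLike.re_to_complex] at hre
    calc (⟪e (Bᴴ *ᵥ ⇑(w i)), e (X *ᵥ ⇑(w i))⟫_ℂ).re
        ≤ ‖e (Bᴴ *ᵥ ⇑(w i))‖ * ‖e (X *ᵥ ⇑(w i))‖ := hre
      _ ≤ 1 * lam i := by
          apply mul_le_mul
          · rw [← hwnorm i]; exact hBH _
          · rw [hXwnorm i]
          · rw [hXwnorm i]; exact hlam0 i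
          · norm_num
      _ = lam i := one_mul _
  have heq : ∀ i, (star ⇑(w i) ⬝ᵥ ((B * X) *ᵥ ⇑(w i))).re = lam i := by
    have hsum : ∑ i, (star ⇑(w i) ⬝ᵥ ((B * X) *ᵥ ⇑(w i))).re = ∑ i, lam i := by
      have := congrArg Complex.re htrsum
      simpa [Complex.re_sum] using this
    intro i
    exact (Finset.sum_eq_sum_iff_of_le (fun i _ => hble i)).mp hsum i (Finset.mem_univ i)
  have hvec : ∀ i, (B * X) *ᵥ ⇑(w i) = P *ᵥ ⇑(w i) := by
    intro i
    rcases eq_or_lt_of_le (hlam0 i) with h0 | hpos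
    · have hx0 : X *ᵥ ⇑(w i) = 0 := by
        have h1 : ‖e (X *ᵥ ⇑(w i))‖ = 0 := by rw [hXwnorm i, ← h0]
        have h2 := norm_eq_zero.mp h1
        exact congrArg WithLp.ofLp h2
      rw [← mulVec_mulVec, hx0, mulVec_zero, hPw i, ← h0]
      simp
    · set a := e (Bᴴ *ᵥ ⇑(w i)) with ha
      set x := e (X *ᵥ ⇑(w i)) with hx
      have hre : (⟪a, x⟫_ℂ).re = lam i := by rw [ha, hx, ← hci i]; exact heq i
      have hxn : ‖x‖ = lam i := hXwnorm i
      have han : ‖a‖ ≤ 1 := by rw [← hwnorm i]; exact hBH _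
      have han1 : ‖a‖ = 1 := by
        have h1 := re_inner_le_norm (𝕜 := ℂ) a x
        rw [RCLike.re_to_complex, hre, hxn] at h1
        nlinarith
      have hxa : x = (lam i : ℂ) • a := by
        have hns := norm_sub_sq (𝕜 := ℂ) x ((lam i : ℂ) • a)
        have h2 : ⟪x, (lam i : ℂ) • a⟫_ℂ = (lam i : ℂ) * ⟪x, a⟫_ℂ :=
          inner_smul_right _ _ _
        have h3 : (⟪x, a⟫_ℂ).re = lam i := by
          have hsym := inner_re_symm (𝕜 := ℂ) x a
          rw [RCLike.re_to_complex, RCLike.re_to_complex] at hsym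
          rw [hsym, hre]
        have h4 : RCLike.re ⟪x, (lam i : ℂ) • a⟫_ℂ = lam i * lam i := by
          rw [h2, RCLike.re_to_complex]
          simp only [Complex.mul_re, Complex.ofReal_re, Complex.ofReal_im]
          rw [h3]; ring
        have h5 : ‖(lam i : ℂ) • a‖ = lam i := by
          rw [norm_smul, han1, mul_one, Complex.norm_real, Real.norm_eq_abs,
            abs_of_nonneg (hlam0 i)]
        have h6 : ‖x - (lam i : ℂ) • a‖ ^ 2 = 0 := by
          rw [hns, h4, h5, hxn]; ring
        have h7 : x - (lam i : ℂ) • a = 0 := by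
          have := pow_eq_zero_iff (n := 2) (by norm_num) |>.mp h6
          exact norm_eq_zero.mp this
        linear_combination (norm := module) h7
      have hgeq : B *ᵥ (Bᴴ *ᵥ ⇑(w i)) = ⇑(w i) := by
        set g := e (B *ᵥ (Bᴴ *ᵥ ⇑(w i))) with hg
        have hgn : ‖g‖ ≤ 1 := by
          rw [hg]
          calc ‖e (B *ᵥ (Bᴴ *ᵥ ⇑(w i)))‖ ≤ ‖e (Bᴴ *ᵥ ⇑(w i))‖ := hB _
            _ = 1 := han1
        have hrewg : (⟪e ⇑(w i), g⟫_ℂ).re = 1 := by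
          rw [hg, inner_e, dot_adjoint B]
          have h8 : (star (Bᴴ *ᵥ ⇑(w i)) ⬝ᵥ (Bᴴ *ᵥ ⇑(w i))).re = ‖a‖ ^ 2 :=
            (norm_e_sq _).symm
          rw [h8, han1]; norm_num
        have hns := norm_sub_sq (𝕜 := ℂ) g (e ⇑(w i))
        have h9 : RCLike.re ⟪g, e ⇑(w i)⟫_ℂ = 1 := by
          rw [inner_re_symm, RCLike.re_to_complex]
          exact hrewg
        have h10 : ‖g - e ⇑(w i)‖ ^ 2 ≤ 0 := by
          rw [hns, h9, hwnorm i]; nlinarith [hgn, norm_nonneg g]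
        have h11 : g - e ⇑(w i) = 0 := by
          have h12 : ‖g - e ⇑(w i)‖ ^ 2 = 0 := le_antisymm h10 (by positivity)
          exact norm_eq_zero.mp (pow_eq_zero_iff (n := 2) (by norm_num) |>.mp h12)
        have h13 : g = e ⇑(w i) := by linear_combination (norm := module) h11
        exact congrArg WithLp.ofLp h13
      have hxa' : X *ᵥ ⇑(w i) = (lam i : ℂ) • (Bᴴ *ᵥ ⇑(w i)) := congrArg WithLp.ofLp hxa
      rw [← mulVec_mulVec, hxa', mulVec_smul, hgeq, hPw i]
  set U : Matrix d d ℂ := (hherm.eigenvectorUnitary : Matrix d d ℂ) with hUdef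
  have hUcol : ∀ (M : Matrix d d ℂ) (a i), (M * U) a i = (M *ᵥ ⇑(w i)) a := by
    intro M a i
    simp [hUdef, Matrix.mul_apply, Matrix.mulVec, dotProduct,
      Matrix.IsHermitian.eigenvectorUnitary_apply]
    rfl
  have hcol : (B * X) * U = P * U := by
    ext a i; rw [hUcol, hUcol, hvec i]
  have hU1 : U * star U = 1 := (Matrix.mem_unitaryGroup_iff).mp hherm.eigenvectorUnitary.2
  calc B * X = ((B * X) * U) * star U := by rw [Matrix.mul_assoc, hU1, Matrix.mul_one]
    _ = (P * U) * star U := by rw [hcol]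
    _ = P * (U * star U) := by rw [Matrix.mul_assoc]
    _ = P := by rw [hU1, Matrix.mul_one]

lemma norm_e_sq' {d : Type*} [Fintype d] (x : d → ℂ) : ‖e x‖ ^ 2 = ∑ i, ‖x i‖ ^ 2 := by
  rw [EuclideanSpace.norm_eq, Real.sq_sqrt (by positivity)]
  rfl

lemma dot_star_self_eq_one {n : ℕ} {a : Fin n → ℂ} (ha : ∑ i, ‖a i‖ ^ 2 = (1:ℝ)) :
    star a ⬝ᵥ a = (1 : ℂ) := by
  have : star a ⬝ᵥ a = ((∑ i, ‖a i‖ ^ 2 : ℝ) : ℂ) := by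
    rw [dotProduct]
    push_cast
    apply Finset.sum_congr rfl
    intro i _
    rw [Pi.star_apply, Complex.star_def, ← Complex.normSq_eq_conj_mul_self,
      Complex.normSq_eq_norm_sq]
    norm_cast
  rw [this, ha, Complex.ofReal_one]

lemma norm_e_unit {n : ℕ} {a : Fin n → ℂ} (ha : ∑ i, ‖a i‖ ^ 2 = (1:ℝ)) : ‖e a‖ = 1 := by
  have h := norm_e_sq' a
  rw [ha] at h
  nlinarith [norm_nonneg (e a)]

lemma outer_conjT {n : ℕ} (a b : Fin n → ℂ) : (outer a b)ᴴ = outer b a := by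
  ext i j
  simp [outer, Matrix.conjTranspose_apply]
  ring

lemma outer_mul_outer {n : ℕ} (a b c f : Fin n → ℂ) :
    outer a b * outer c f = (star b ⬝ᵥ c) • outer a f := by
  ext i k
  simp only [Matrix.mul_apply, outer, Matrix.of_apply, Matrix.smul_apply, dotProduct,
    smul_eq_mul, Finset.sum_mul, Finset.mul_sum]
  apply Finset.sum_congr rfl
  intro j _
  simp only [Pi.star_apply]
  ring

lemma kron_one_conjT {n m : ℕ} (A : Matrix (Fin n) (Fin n) ℂ) :
    (A ⊗ₖ (1 : Matrix (Fin m) (Fin m) ℂ))ᴴ = Aᴴ ⊗ₖ (1 : Matrix (Fin m) (Fin m) ℂ) := by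
  ext p q
  simp only [Matrix.conjTranspose_apply, Matrix.kroneckerMap_apply, Matrix.one_apply]
  by_cases hh : p.2 = q.2
  · simp [hh]
  · rw [if_neg hh, if_neg (fun h : q.2 = p.2 => hh h.symm)]
    simp

lemma kron_one_mul_kron_one {n m : ℕ} (A B : Matrix (Fin n) (Fin n) ℂ) :
    (A ⊗ₖ (1 : Matrix (Fin m) (Fin m) ℂ)) * (B ⊗ₖ (1 : Matrix (Fin m) (Fin m) ℂ))
      = (A * B) ⊗ₖ (1 : Matrix (Fin m) (Fin m) ℂ) := by
  rw [← Matrix.mul_kronecker_mul, Matrix.one_mul]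

lemma outer_kron_contraction {n m : ℕ} {a b : Fin n → ℂ} (ha : ∑ i, ‖a i‖ ^ 2 = (1:ℝ))
    (hb : ∑ i, ‖b i‖ ^ 2 = (1:ℝ)) (z : Fin n × Fin m → ℂ) :
    ‖e ((outer a b ⊗ₖ (1 : Matrix (Fin m) (Fin m) ℂ)) *ᵥ z)‖ ≤ ‖e z‖ := by
  set t : Fin m → ℂ := fun c => star b ⬝ᵥ (fun j => z (j, c)) with ht
  have hMz : ∀ p : Fin n × Fin m,
      ((outer a b ⊗ₖ (1 : Matrix (Fin m) (Fin m) ℂ)) *ᵥ z) p = a p.1 * t p.2 := by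
    rintro ⟨i, c⟩
    simp only [Matrix.mulVec, dotProduct, Fintype.sum_prod_type,
      Matrix.kroneckerMap_apply, Matrix.one_apply, outer, Matrix.of_apply, ht]
    simp only [mul_ite, mul_one, mul_zero, ite_mul, zero_mul, Finset.sum_ite_eq,
      Finset.mem_univ, if_true, Finset.mul_sum]
    apply Finset.sum_congr rfl
    intro j _
    simp only [Pi.star_apply]
    ring
  have hsq : ‖e ((outer a b ⊗ₖ (1 : Matrix (Fin m) (Fin m) ℂ)) *ᵥ z)‖ ^ 2 ≤ ‖e z‖ ^ 2 := by
    rw [norm_e_sq', norm_e_sq']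
    calc ∑ p : Fin n × Fin m, ‖((outer a b ⊗ₖ (1 : Matrix (Fin m) (Fin m) ℂ)) *ᵥ z) p‖ ^ 2
        = ∑ c : Fin m, ‖t c‖ ^ 2 := by
          rw [Fintype.sum_prod_type]
          simp only [hMz, norm_mul, mul_pow]
          rw [← Finset.sum_mul_sum, ha, one_mul]
      _ ≤ ∑ c : Fin m, ∑ j : Fin n, ‖z (j, c)‖ ^ 2 := by
          apply Finset.sum_le_sum
          intro c _
          have hcs := norm_inner_le_norm (𝕜 := ℂ) (e b) (e (fun j => z (j, c)))
          rw [inner_e] at hcs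
          rw [norm_e_unit hb, one_mul] at hcs
          have h2 : ‖t c‖ ^ 2 ≤ ‖e (fun j => z (j, c))‖ ^ 2 := by
            rw [ht]
            nlinarith [norm_nonneg (t c), norm_nonneg (e (fun j => z (j, c)))]
          rw [norm_e_sq'] at h2
          exact h2
      _ = ∑ p : Fin n × Fin m, ‖z p‖ ^ 2 := by
          rw [Fintype.sum_prod_type, Finset.sum_comm]
  nlinarith [norm_nonneg (e ((outer a b ⊗ₖ (1 : Matrix (Fin m) (Fin m) ℂ)) *ᵥ z)),
    norm_nonneg (e z)]
/-- If `‖X‖₁ = 1` and the partial trace of `X` over the second factor is a rank-one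
operator `uv*` with `u, v` unit vectors, then `X = uv* ⊗ σ` for a density operator `σ`. -/
theorem stmt7 (n m : ℕ) (X : Matrix (Fin n × Fin m) (Fin n × Fin m) ℂ)
    (hX : traceNorm X = 1) (u v : Fin n → ℂ)
    (hu : ∑ i, ‖u i‖ ^ 2 = (1 : ℝ)) (hv : ∑ i, ‖v i‖ ^ 2 = (1 : ℝ))
    (h : ptraceRight X = outer u v) :
    ∃ σ : Matrix (Fin m) (Fin m) ℂ, IsDensity σ ∧ X = outer u v ⊗ₖ σ := by
  classical
  set B : Matrix (Fin n × Fin m) (Fin n × Fin m) ℂ :=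
    outer v u ⊗ₖ (1 : Matrix (Fin m) (Fin m) ℂ) with hBdef
  set P : Matrix (Fin n × Fin m) (Fin n × Fin m) ℂ :=
    (Matrix.posSemidef_conjTranspose_mul_self X).sqrt with hPdef
  have hP : P.PosSemidef := (Matrix.posSemidef_conjTranspose_mul_self X).posSemidef_sqrt
  have hXX : Xᴴ * X = P * P :=
    ((Matrix.posSemidef_conjTranspose_mul_self X).sqrt_mul_self).symm
  have hBHeq : Bᴴ = outer u v ⊗ₖ (1 : Matrix (Fin m) (Fin m) ℂ) := by
    rw [hBdef, kron_one_conjT, outer_conjT]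
  have huu1 : star u ⬝ᵥ u = (1:ℂ) := dot_star_self_eq_one hu
  have hvv1 : star v ⬝ᵥ v = (1:ℂ) := dot_star_self_eq_one hv
  -- trace of P is 1
  have hPtr : P.trace = 1 := by
    have h1 : (P.trace).re = 1 := hX
    have h2 : (P.trace).im = 0 := by
      have h3 := Matrix.trace_conjTranspose P
      rw [hP.isHermitian.eq] at h3
      have h4 := congrArg Complex.im h3
      simp only [Complex.star_def, Complex.conj_im] at h4
      linarith
    exact Complex.ext (by rw [h1, Complex.one_re]) (by rw [h2, Complex.one_im])
  -- trace of B * X is 1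
  have hBXtr : (B * X).trace = 1 := by
    have hcalc : (B * X).trace = ∑ i, ∑ j, (v i * star (u j)) * ∑ a, X (j,a) (i,a) := by
      rw [Matrix.trace, Fintype.sum_prod_type]
      apply Finset.sum_congr rfl
      intro i _
      have hdiag : ∀ a : Fin m, (B * X).diag (i, a)
          = ∑ j, v i * star (u j) * X (j,a) (i,a) := by
        intro a
        simp only [Matrix.diag_apply, Matrix.mul_apply, hBdef, Matrix.kroneckerMap_apply,
          Matrix.one_apply, outer, Matrix.of_apply, Fintype.sum_prod_type,
          mul_ite, mul_one, mul_zero, ite_mul, zero_mul,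
          Finset.sum_ite_eq, Finset.mem_univ, if_true]
      simp only [hdiag]
      rw [Finset.sum_comm]
      apply Finset.sum_congr rfl
      intro j _
      rw [Finset.mul_sum]
    rw [hcalc]
    have h' : ∀ j i, (∑ a, X (j,a) (i,a)) = u j * star (v i) := by
      intro j i
      have h5 := congrFun (congrFun h j) i
      simpa [ptraceRight, outer] using h5
    simp only [h']
    calc ∑ i, ∑ j, (v i * star (u j)) * (u j * star (v i))
        = (∑ i, star (v i) * v i) * (∑ j, star (u j) * u j) := by
          rw [Finset.sum_mul_sum]
          apply Finset.sum_congr rfl; intro i _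
          apply Finset.sum_congr rfl; intro j _
          ring
      _ = 1 := by
          have e1 : ∑ i, star (v i) * v i = star v ⬝ᵥ v := rfl
          have e2 : ∑ j, star (u j) * u j = star u ⬝ᵥ u := rfl
          rw [e1, e2, huu1, hvv1, one_mul]
  -- the key equality
  have hkey : B * X = P := by
    apply key B X P hP hXX
    · intro z
      rw [hBdef]
      exact outer_kron_contraction hv hu z
    · intro z
      rw [hBHeq]
      exact outer_kron_contraction hu hv z
    · rw [hBXtr, hPtr]
  -- column support
  have hBhB : Bᴴ * B = outer u u ⊗ₖ (1 : Matrix (Fin m) (Fin m) ℂ) := by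
    rw [hBHeq, hBdef, kron_one_mul_kron_one, outer_mul_outer, hvv1, one_smul]
  have hXQX : Xᴴ * ((outer u u ⊗ₖ (1 : Matrix (Fin m) (Fin m) ℂ)) * X) = Xᴴ * X := by
    have h1 : (B*X)ᴴ * (B*X) = Xᴴ * X := by
      rw [hkey, hP.isHermitian.eq, ← hXX]
    have h2 : (B*X)ᴴ * (B*X)
        = Xᴴ * ((outer u u ⊗ₖ (1 : Matrix (Fin m) (Fin m) ℂ)) * X) := by
      rw [Matrix.conjTranspose_mul, Matrix.mul_assoc, ← Matrix.mul_assoc Bᴴ B X, hBhB]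
    rw [← h2, h1]
  have hQherm : (outer u u ⊗ₖ (1 : Matrix (Fin m) (Fin m) ℂ))ᴴ
      = outer u u ⊗ₖ (1 : Matrix (Fin m) (Fin m) ℂ) := by
    rw [kron_one_conjT, outer_conjT]
  have hQQ : (outer u u ⊗ₖ (1 : Matrix (Fin m) (Fin m) ℂ))
      * (outer u u ⊗ₖ (1 : Matrix (Fin m) (Fin m) ℂ))
      = outer u u ⊗ₖ (1 : Matrix (Fin m) (Fin m) ℂ) := by
    rw [kron_one_mul_kron_one, outer_mul_outer, huu1, one_smul]
  have hQX : (outer u u ⊗ₖ (1 : Matrix (Fin m) (Fin m) ℂ)) * X = X := by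
    set Q : Matrix (Fin n × Fin m) (Fin n × Fin m) ℂ
      := outer u u ⊗ₖ (1 : Matrix (Fin m) (Fin m) ℂ) with hQdef
    have hYY : (X - Q * X)ᴴ * (X - Q * X) = 0 := by
      have hexp : (X - Q * X)ᴴ * (X - Q * X)
          = Xᴴ * X - Xᴴ * (Q * X) - (Xᴴ * (Q * X) - Xᴴ * (Q * (Q * X))) := by
        rw [Matrix.conjTranspose_sub, Matrix.conjTranspose_mul, hQherm,
          Matrix.sub_mul, Matrix.mul_sub, Matrix.mul_sub]
        simp only [Matrix.mul_assoc]
      rw [hexp, ← Matrix.mul_assoc Q Q X, hQQ, hXQX]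
      abel
    have hY0 := Matrix.conjTranspose_mul_self_eq_zero.mp hYY
    have := sub_eq_zero.mp hY0
    exact this.symm
  have hXP2 : X = (outer u v ⊗ₖ (1 : Matrix (Fin m) (Fin m) ℂ)) * P := by
    have h1 : (outer u v ⊗ₖ (1 : Matrix (Fin m) (Fin m) ℂ)) * B
        = outer u u ⊗ₖ (1 : Matrix (Fin m) (Fin m) ℂ) := by
      rw [hBdef, kron_one_mul_kron_one, outer_mul_outer, hvv1, one_smul]
    calc X = (outer u u ⊗ₖ (1 : Matrix (Fin m) (Fin m) ℂ)) * X := hQX.symm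
      _ = ((outer u v ⊗ₖ (1 : Matrix (Fin m) (Fin m) ℂ)) * B) * X := by rw [h1]
      _ = (outer u v ⊗ₖ (1 : Matrix (Fin m) (Fin m) ℂ)) * (B * X) := by
          rw [Matrix.mul_assoc]
      _ = (outer u v ⊗ₖ (1 : Matrix (Fin m) (Fin m) ℂ)) * P := by rw [hkey]
  have hPvv : P = (outer v v ⊗ₖ (1 : Matrix (Fin m) (Fin m) ℂ)) * P := by
    have h1 : B * (outer u v ⊗ₖ (1 : Matrix (Fin m) (Fin m) ℂ))
        = outer v v ⊗ₖ (1 : Matrix (Fin m) (Fin m) ℂ) := by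
      rw [hBdef, kron_one_mul_kron_one, outer_mul_outer, huu1, one_smul]
    calc P = B * X := hkey.symm
      _ = B * ((outer u v ⊗ₖ (1 : Matrix (Fin m) (Fin m) ℂ)) * P) := by rw [← hXP2]
      _ = (B * (outer u v ⊗ₖ (1 : Matrix (Fin m) (Fin m) ℂ))) * P := by
          rw [Matrix.mul_assoc]
      _ = (outer v v ⊗ₖ (1 : Matrix (Fin m) (Fin m) ℂ)) * P := by rw [h1]
  have hPvv' : P = P * (outer v v ⊗ₖ (1 : Matrix (Fin m) (Fin m) ℂ)) := by
    have hvherm : (outer v v ⊗ₖ (1 : Matrix (Fin m) (Fin m) ℂ))ᴴ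
        = outer v v ⊗ₖ (1 : Matrix (Fin m) (Fin m) ℂ) := by
      rw [kron_one_conjT, outer_conjT]
    have h6 := congrArg Matrix.conjTranspose hPvv
    rw [Matrix.conjTranspose_mul, hvherm, hP.isHermitian.eq] at h6
    exact h6
  have hX3 : X = (outer u v ⊗ₖ (1 : Matrix (Fin m) (Fin m) ℂ))
      * (P * (outer v v ⊗ₖ (1 : Matrix (Fin m) (Fin m) ℂ))) := by
    rw [← hPvv']; exact hXP2
  -- define σ
  set C : Matrix (Fin n × Fin m) (Fin m) ℂ
    := Matrix.of fun p b => v p.1 * (if p.2 = b then 1 else 0) with hCdef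
  set σ : Matrix (Fin m) (Fin m) ℂ := Cᴴ * P * C with hσdef
  have hσPSD : σ.PosSemidef := hP.conjTranspose_mul_mul_same C
  have hσapp : ∀ a b, σ a b = ∑ s, ∑ t, star (v s) * P (s,a) (t,b) * v t := by
    intro a b
    rw [hσdef]
    simp only [Matrix.mul_apply, Matrix.conjTranspose_apply, hCdef, Matrix.of_apply,
      Fintype.sum_prod_type, mul_ite, mul_one, mul_zero, apply_ite (star : ℂ → ℂ),
      star_zero, ite_mul, zero_mul, Finset.sum_ite_eq, Finset.sum_ite_eq',
      Finset.mem_univ, if_true, Finset.sum_mul, Finset.mul_sum]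
    rw [Finset.sum_comm]
  have hXkron : X = outer u v ⊗ₖ σ := by
    rw [hX3]
    ext p q
    obtain ⟨i, a⟩ := p
    obtain ⟨j, b⟩ := q
    rw [Matrix.kroneckerMap_apply, hσapp]
    simp only [Matrix.mul_apply, Matrix.kroneckerMap_apply, Matrix.one_apply, outer,
      Matrix.of_apply, Fintype.sum_prod_type, mul_ite, mul_one, mul_zero, ite_mul, zero_mul,
      Finset.sum_ite_eq, Finset.sum_ite_eq', Finset.mem_univ, if_true, Finset.sum_mul,
      Finset.mul_sum]
    apply Finset.sum_congr rfl
    intro s _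
    rw [Finset.sum_comm]
    simp only [Finset.sum_ite_eq, Finset.sum_ite_eq', Finset.mem_univ, if_true]
    apply Finset.sum_congr rfl
    intro t _
    ring
  -- trace of σ is 1
  have hσtr : σ.trace = 1 := by
    have hui : ∃ i, u i ≠ 0 := by
      by_contra hc
      push_neg at hc
      simp [hc] at hu
    have hvj : ∃ j, v j ≠ 0 := by
      by_contra hc
      push_neg at hc
      simp [hc] at hv
    obtain ⟨i0, hi0⟩ := hui
    obtain ⟨j0, hj0⟩ := hvj
    have h7 := congrFun (congrFun h i0) j0
    rw [hXkron] at h7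
    have h8 : (ptraceRight (outer u v ⊗ₖ σ)) i0 j0
        = (u i0 * star (v j0)) * σ.trace := by
      simp only [ptraceRight, Matrix.of_apply, Matrix.kroneckerMap_apply, outer,
        Matrix.trace, Matrix.diag_apply, Finset.mul_sum]
    rw [h8] at h7
    have h9 : outer u v i0 j0 = u i0 * star (v j0) := rfl
    rw [h9] at h7
    have hne : u i0 * star (v j0) ≠ 0 :=
      mul_ne_zero hi0 (star_ne_zero.mpr hj0)
    have := mul_left_cancel₀ hne (h7.trans (mul_one _).symm)
    exact this
  exact ⟨σ, ⟨hσPSD, hσtr⟩, hXkron⟩
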